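/- The map φ from the set of flags to the set of 1-dimensional subspaces of Ṽ is injective: if Φ and Ψ are flags with φ(Φ) = φ(Ψ), then Φ = Ψ. -/

import Mathlib

open TensorProduct

/-- A flag of a 3-dimensional projective space: a triple `(P, g, ε)` of subspaces of the
underlying 4-dimensional vector space `V` with `finrank P = 1`, `finrank g = 2`,
`finrank ε = 3` and `P ≤ g ≤ ε`. -/
structure ProjFlag (K : Type*) (V : Type*) [DivisionRing K] [AddCommGroup V]
    [Module K V] where
  pt : Submodule K V
  ln : Submodule K V
  pl : Submodule K V
  finrank_pt : Module.finrank K pt = 1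
  finrank_ln : Module.finrank K ln = 2
  finrank_pl : Module.finrank K pl = 3
  pt_le_ln : pt ≤ ln
  ln_le_pl : ln ≤ pl

variable (K V : Type*) [Field K] [AddCommGroup V] [Module K V]

-- Helper instances (the canonical tensor product instances; registering them here merely
-- speeds up instance search, which otherwise gets lost unfolding `⋀[K]^2 V`).
noncomputable instance : AddCommGroup (↥(⋀[K]^2 V) ⊗[K] Module.Dual K V) :=
  TensorProduct.addCommGroup

noncomputable instance : AddCommGroup (V ⊗[K] (↥(⋀[K]^2 V) ⊗[K] Module.Dual K V)) :=
  TensorProduct.addCommGroup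

/-- The wedge `q ∧ r` of two vectors, as an element of the second exterior power. -/
def wedge2 (q r : V) : ⋀[K]^2 V :=
  ⟨ExteriorAlgebra.ιMulti K 2 ![q, r],
    ExteriorAlgebra.ιMulti_range K 2 (Set.mem_range_self _)⟩

/-- The 96-dimensional space `Ṽ = V ⊗ Λ²V ⊗ V*`. -/
abbrev FlagTensor := V ⊗[K] ↥(⋀[K]^2 V) ⊗[K] (Module.Dual K V)

/-- `x = φ(Φ)`: the 1-dimensional subspace `x` of `Ṽ` represents the flag `Φ`, i.e. `x` is
spanned by `p ⊗ (q ∧ r) ⊗ e*` where `p` spans the point of `Φ`, `q, r` is a basis of the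
line of `Φ`, and `e*` is a linear form whose kernel is the plane of `Φ`. -/
def IsFlagRep (Φ : ProjFlag K V) (x : Submodule K (FlagTensor K V)) : Prop :=
  ∃ (p q r : V) (e : Module.Dual K V),
    Submodule.span K {p} = Φ.pt ∧ Submodule.span K {q, r} = Φ.ln ∧
    LinearMap.ker e = Φ.pl ∧
    x = Submodule.span K {p ⊗ₜ[K] wedge2 K V q r ⊗ₜ[K] e}

/-- The flag variety `𝒢`: the set of all 1-dimensional subspaces `φ(Φ)` of `Ṽ` with `Φ` a
flag. -/
def flagVariety : Set (Submodule K (FlagTensor K V)) :=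
  {x | ∃ Φ : ProjFlag K V, IsFlagRep K V Φ x}

section Aux

open Module ExteriorAlgebra

variable {K : Type*} [Field K]

/-- A tensor of two nonzero vectors is nonzero. -/
lemma aux_tmul_ne_zero {M N : Type*} [AddCommGroup M] [AddCommGroup N] [Module K M]
    [Module K N] {a : M} {b : N} (ha : a ≠ 0) (hb : b ≠ 0) :
    a ⊗ₜ[K] b ≠ (0 : M ⊗[K] N) := by
  obtain ⟨f, hf⟩ := not_forall.mp (fun h => ha ((Module.forall_dual_apply_eq_zero_iff K a).mp h))
  intro h
  have h2 : f a • b = 0 := by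
    have := congrArg (fun z => TensorProduct.lid K N (LinearMap.rTensor N f z)) h
    simpa using this
  exact hb ((smul_eq_zero.mp h2).resolve_left hf)

/-- If a nonzero elementary tensor is a multiple of another elementary tensor, the factors
are proportional. -/
lemma aux_factor {M N : Type*} [AddCommGroup M] [AddCommGroup N] [Module K M]
    [Module K N] {a a' : M} {b b' : N} (ha : a ≠ 0) (hb : b ≠ 0) {c : K}
    (h : a ⊗ₜ[K] b = c • (a' ⊗ₜ[K] b')) :
    a ∈ Submodule.span K {a'} ∧ b ∈ Submodule.span K {b'} := by
  constructor
  · by_contra hn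
    obtain ⟨f, hf1, hf2⟩ := Submodule.exists_dual_map_eq_bot_of_notMem hn inferInstance
    have hfa' : f a' = 0 := by
      have : f a' ∈ Submodule.map f (Submodule.span K {a'}) :=
        Submodule.mem_map_of_mem (Submodule.mem_span_singleton_self a')
      simpa [hf2] using this
    have h2 : f a • b = 0 := by
      have := congrArg (fun z => TensorProduct.lid K N (LinearMap.rTensor N f z)) h
      simpa [hfa'] using this
    exact hb ((smul_eq_zero.mp h2).resolve_left hf1)
  · by_contra hn
    obtain ⟨f, hf1, hf2⟩ := Submodule.exists_dual_map_eq_bot_of_notMem hn inferInstance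
    have hfb' : f b' = 0 := by
      have : f b' ∈ Submodule.map f (Submodule.span K {b'}) :=
        Submodule.mem_map_of_mem (Submodule.mem_span_singleton_self b')
      simpa [hf2] using this
    have h2 : f b • a = 0 := by
      have := congrArg (fun z => TensorProduct.rid K M (LinearMap.lTensor M f z)) h
      simpa [hfb'] using this
    exact ha ((smul_eq_zero.mp h2).resolve_left hf1)

/-- The wedge of a linearly independent family is nonzero. -/
lemma aux_iMulti_ne_zero {V : Type*} [AddCommGroup V] [Module K V]
    {n : ℕ} {w : Fin n → V} (h : LinearIndependent K w) :
    ExteriorAlgebra.ιMulti K n w ≠ 0 := by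
  classical
  set p := Submodule.span K (Set.range w) with hp
  let B : Basis (Fin n) K p := Basis.span h
  obtain ⟨q, hq⟩ := Submodule.exists_isCompl p
  let π : V →ₗ[K] p := p.linearProjOfIsCompl q hq
  let A : V [⋀^Fin n]→ₗ[K] K := B.det.compLinearMap π
  intro h0
  have h1 := congrArg (ExteriorAlgebra.liftAlternating (Function.update (fun _ => 0) n A)) h0
  rw [ExteriorAlgebra.liftAlternating_apply_ιMulti, map_zero, Function.update_self] at h1
  have hw : (π ∘ w) = ⇑B := by
    funext i
    have h3 : π ((B i : V)) = B i := Submodule.linearProjOfIsCompl_apply_left hq (B i)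
    have h4 : (B i : V) = w i := congrArg Subtype.val (Basis.span_apply h i)
    rw [Function.comp_apply, ← h4]
    exact h3
  have h5 : A w = 1 := by
    show B.det (π ∘ w) = 1
    rw [hw, Basis.det_self]
  rw [h5] at h1
  exact one_ne_zero h1

lemma aux_iMulti_two {V : Type*} [AddCommGroup V] [Module K V] (q r : V) :
    ExteriorAlgebra.ιMulti K 2 ![q, r] = ι K q * ι K r := by
  simp [ExteriorAlgebra.ιMulti_apply, List.ofFn_succ]

lemma aux_iMulti_three {V : Type*} [AddCommGroup V] [Module K V] (v q r : V) :
    ExteriorAlgebra.ιMulti K 3 ![v, q, r] = ι K v * (ι K q * ι K r) := by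
  simp [ExteriorAlgebra.ιMulti_apply, List.ofFn_succ, mul_assoc]

lemma aux_mem_span {V : Type*} [AddCommGroup V] [Module K V] {q r v : V}
    (h : LinearIndependent K ![q, r])
    (hv : ι K v * (ι K q * ι K r) = 0) : v ∈ Submodule.span K {q, r} := by
  by_contra hn
  have hr : Set.range ![q, r] = {q, r} := by
    rw [Matrix.range_cons, Matrix.range_cons, Matrix.range_empty, Set.union_empty]
    rfl
  have h3 : LinearIndependent K ![v, q, r] := by
    rw [show ![v, q, r] = Fin.cons v ![q, r] from rfl, linearIndependent_fin_cons]
    exact ⟨h, by rwa [hr]⟩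
  exact aux_iMulti_ne_zero h3 (by rw [aux_iMulti_three]; exact hv)

end Aux

set_option synthInstance.maxHeartbeats 1000000 in
 set_option maxHeartbeats 1000000 in
/-- The map `φ` from flags to 1-dimensional subspaces of `Ṽ` is injective. -/
theorem flagRep_injective
    (hV : Module.finrank K V = 4)
    (Φ Ψ : ProjFlag K V) (x : Submodule K (FlagTensor K V))
    (hΦ : IsFlagRep K V Φ x) (hΨ : IsFlagRep K V Ψ x) :
    Φ = Ψ := by
  classical
  have : FiniteDimensional K V := FiniteDimensional.of_finrank_eq_succ hV
  obtain ⟨p, q, r, e, h1, h2, h3, h4⟩ := hΦ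
  obtain ⟨p', q', r', e', g1, g2, g3, g4⟩ := hΨ
  -- basic nonvanishing facts
  have hp : p ≠ 0 := by
    rintro rfl
    rw [Submodule.span_zero_singleton] at h1
    have := Φ.finrank_pt
    rw [← h1] at this
    simp at this
  have hp' : p' ≠ 0 := by
    rintro rfl
    rw [Submodule.span_zero_singleton] at g1
    have := Ψ.finrank_pt
    rw [← g1] at this
    simp at this
  have he : e ≠ 0 := by
    rintro rfl
    rw [LinearMap.ker_zero] at h3
    have := Φ.finrank_pl
    rw [← h3, finrank_top, hV] at this
    exact (by norm_num : (4 : ℕ) ≠ 3) this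
  have he' : e' ≠ 0 := by
    rintro rfl
    rw [LinearMap.ker_zero] at g3
    have := Ψ.finrank_pl
    rw [← g3, finrank_top, hV] at this
    exact (by norm_num : (4 : ℕ) ≠ 3) this
  have hrange : ∀ a b : V, Set.range ![a, b] = {a, b} := by
    intro a b
    rw [Matrix.range_cons, Matrix.range_cons, Matrix.range_empty, Set.union_empty]
    rfl
  have hqr : LinearIndependent K ![q, r] := by
    rw [linearIndependent_iff_card_eq_finrank_span]
    rw [show Set.finrank K (Set.range ![q, r]) =
      Module.finrank K (Submodule.span K (Set.range ![q, r])) from rfl, hrange q r, h2,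
      Φ.finrank_ln]
    simp
  have hqr' : LinearIndependent K ![q', r'] := by
    rw [linearIndependent_iff_card_eq_finrank_span]
    rw [show Set.finrank K (Set.range ![q', r']) =
      Module.finrank K (Submodule.span K (Set.range ![q', r'])) from rfl, hrange q' r', g2,
      Ψ.finrank_ln]
    simp
  have hw : wedge2 K V q r ≠ 0 := by
    intro h0
    exact aux_iMulti_ne_zero hqr (congrArg Subtype.val h0)
  have hw' : wedge2 K V q' r' ≠ 0 := by
    intro h0
    exact aux_iMulti_ne_zero hqr' (congrArg Subtype.val h0)
  have hwe : p ⊗ₜ[K] wedge2 K V q r ≠ 0 := aux_tmul_ne_zero hp hw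
  -- the representing tensors are proportional
  have hmem : p ⊗ₜ[K] wedge2 K V q r ⊗ₜ[K] e ∈
      Submodule.span K {p' ⊗ₜ[K] wedge2 K V q' r' ⊗ₜ[K] e'} := by
    rw [← g4, h4]
    exact Submodule.mem_span_singleton_self _
  obtain ⟨c, hc⟩ := Submodule.mem_span_singleton.mp hmem
  obtain ⟨hwe_mem, he_mem⟩ := aux_factor hwe he hc.symm
  obtain ⟨d, hd⟩ := Submodule.mem_span_singleton.mp hwe_mem
  obtain ⟨hp_mem, hw_mem⟩ := aux_factor hp hw hd.symm
  -- point
  have hpt : Φ.pt = Ψ.pt := by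
    obtain ⟨α, hα⟩ := Submodule.mem_span_singleton.mp hp_mem
    have hα0 : α ≠ 0 := by rintro rfl; rw [zero_smul] at hα; exact hp hα.symm
    rw [← h1, ← g1, ← hα, Submodule.span_singleton_smul_eq (IsUnit.mk0 α hα0)]
  -- plane
  have hpl : Φ.pl = Ψ.pl := by
    obtain ⟨γ, hγ⟩ := Submodule.mem_span_singleton.mp he_mem
    have hγ0 : γ ≠ 0 := by rintro rfl; rw [zero_smul] at hγ; exact he hγ.symm
    rw [← h3, ← g3, ← hγ, LinearMap.ker_smul _ _ hγ0]
  -- line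
  have hln : Φ.ln = Ψ.ln := by
    obtain ⟨β, hβ⟩ := Submodule.mem_span_singleton.mp hw_mem
    have hβ0 : β ≠ 0 := by rintro rfl; rw [zero_smul] at hβ; exact hw hβ.symm
    -- pass to the exterior algebra
    have hβ' : ExteriorAlgebra.ι K q * ExteriorAlgebra.ι K r =
        β • (ExteriorAlgebra.ι K q' * ExteriorAlgebra.ι K r') := by
      have := congrArg Subtype.val hβ
      rw [Submodule.coe_smul] at this
      rw [← aux_iMulti_two, ← aux_iMulti_two]
      exact this.symm
    have hq_mem : q ∈ Submodule.span K ({q', r'} : Set V) := by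
      apply aux_mem_span hqr'
      have hz1 : ExteriorAlgebra.ι K q * (ExteriorAlgebra.ι K q * ExteriorAlgebra.ι K r) = 0 := by
        rw [← mul_assoc, ExteriorAlgebra.ι_sq_zero, zero_mul]
      have h5 : ExteriorAlgebra.ι K q * (ExteriorAlgebra.ι K q * ExteriorAlgebra.ι K r) =
          β • (ExteriorAlgebra.ι K q *
            (ExteriorAlgebra.ι K q' * ExteriorAlgebra.ι K r')) := by
        rw [hβ', mul_smul_comm]
      rw [hz1] at h5
      exact (smul_eq_zero.mp h5.symm).resolve_left hβ0
    have hr_mem : r ∈ Submodule.span K ({q', r'} : Set V) := by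
      apply aux_mem_span hqr'
      have hanti : ExteriorAlgebra.ι K r * ExteriorAlgebra.ι K q =
          -(ExteriorAlgebra.ι K q * ExteriorAlgebra.ι K r) :=
        eq_neg_of_add_eq_zero_left (ExteriorAlgebra.ι_add_mul_swap r q)
      have hz1 : ExteriorAlgebra.ι K r * (ExteriorAlgebra.ι K q * ExteriorAlgebra.ι K r) = 0 := by
        rw [← mul_assoc, hanti, neg_mul, mul_assoc, ExteriorAlgebra.ι_sq_zero, mul_zero, neg_zero]
      have h5 : ExteriorAlgebra.ι K r * (ExteriorAlgebra.ι K q * ExteriorAlgebra.ι K r) =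
          β • (ExteriorAlgebra.ι K r *
            (ExteriorAlgebra.ι K q' * ExteriorAlgebra.ι K r')) := by
        rw [hβ', mul_smul_comm]
      rw [hz1] at h5
      exact (smul_eq_zero.mp h5.symm).resolve_left hβ0
    have hle : Submodule.span K ({q, r} : Set V) ≤ Submodule.span K ({q', r'} : Set V) := by
      rw [Submodule.span_le]
      rintro v (rfl | rfl)
      · exact hq_mem
      · exact hr_mem
    rw [← h2, ← g2]
    apply Submodule.eq_of_le_of_finrank_eq hle
    rw [h2, g2, Φ.finrank_ln, Ψ.finrank_ln]
  obtain ⟨pt1, ln1, pl1, _, _, _, _, _⟩ := Φ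
  obtain ⟨pt2, ln2, pl2, _, _, _, _, _⟩ := Ψ
  simp only at hpt hln hpl
  simp only [ProjFlag.mk.injEq]
  exact ⟨hpt, hln, hpl⟩
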